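/- Let n, k be integers with n ≥ 3 and 1 ≤ k, and let u be a positive twice continuously differentiable function on an interval I ⊂ ℝ such that 1 − (2/(n−2))² (u′(t)/u(t))² > 0 for all t ∈ I and u satisfies the radial cylindrical σ_k equation on I. Then the function h(t) := [ 1 − u(t)^{−4k/(n−2)} (1 − (2/(n−2))²(u′(t)/u(t))²)^{k} ] u(t)^{2n/(n−2)} is constant on I; that is, h is differentiable on I with h′(t) = 0 for all t ∈ I. -/

import Mathlib

open Set Filter

/-- The radial cylindrical `σ_k` equation
`(1 − (2/(n−2))²(u′/u)²)^{k−1} [ (k/n)(2/(n−2))(−u″/u + (u′/u)²)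
  + (1/2 − k/n)(1 − (2/(n−2))²(u′/u)²) ] u^{−4k/(n−2)} = 1/2`,
satisfied by the conformal factor of a rotationally symmetric metric
`g = u(t)^{4/(n-2)}(dt² + dθ²)` of constant `σ_k` curvature `binom(n,k)(1/2)^k`
on the cylinder; `u'` and `u''` denote the first and second derivatives of `u`. -/
def RadialSigmaKEq (n k : ℕ) (u u' u'' : ℝ → ℝ) (t : ℝ) : Prop :=
  (1 - (2 / ((n : ℝ) - 2)) ^ 2 * (u' t / u t) ^ 2) ^ (k - 1) *
      (((k : ℝ) / (n : ℝ)) * (2 / ((n : ℝ) - 2)) * (-(u'' t / u t) + (u' t / u t) ^ 2)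
        + (1 / 2 - (k : ℝ) / (n : ℝ)) * (1 - (2 / ((n : ℝ) - 2)) ^ 2 * (u' t / u t) ^ 2)) *
      u t ^ (-(4 * (k : ℝ)) / ((n : ℝ) - 2)) = 1 / 2

set_option maxHeartbeats 2000000 in
/-- **The Pohozaev quantity is conserved.**  If `u > 0` is twice continuously differentiable
and satisfies the radial cylindrical `σ_k` equation on an interval `I` with
`1 − (2/(n−2))²(u′/u)² > 0`, then
`h(t) = [1 − u^{−4k/(n−2)}(1 − (2/(n−2))²(u′/u)²)^k] u^{2n/(n−2)}`
is constant on `I`; that is, `h` is differentiable on `I` with derivative `0` everywhere. -/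
theorem pohozaev_quantity_constant
    (n k : ℕ) (hn : 3 ≤ n) (hk : 1 ≤ k)
    (I : Set ℝ) (hI : I.OrdConnected)
    (u u' u'' : ℝ → ℝ)
    (hu_pos : ∀ t ∈ I, 0 < u t)
    (hu' : ∀ t ∈ I, HasDerivWithinAt u (u' t) I t)
    (hu'' : ∀ t ∈ I, HasDerivWithinAt u' (u'' t) I t)
    (hu''_cont : ContinuousOn u'' I)
    (hcone : ∀ t ∈ I, 0 < 1 - (2 / ((n : ℝ) - 2)) ^ 2 * (u' t / u t) ^ 2)
    (heq : ∀ t ∈ I, RadialSigmaKEq n k u u' u'' t) :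
    (∀ s ∈ I, ∀ t ∈ I,
        (1 - u s ^ (-(4 * (k : ℝ)) / ((n : ℝ) - 2)) *
            (1 - (2 / ((n : ℝ) - 2)) ^ 2 * (u' s / u s) ^ 2) ^ k) *
          u s ^ ((2 * (n : ℝ)) / ((n : ℝ) - 2))
        = (1 - u t ^ (-(4 * (k : ℝ)) / ((n : ℝ) - 2)) *
            (1 - (2 / ((n : ℝ) - 2)) ^ 2 * (u' t / u t) ^ 2) ^ k) *
          u t ^ ((2 * (n : ℝ)) / ((n : ℝ) - 2))) ∧
    ∀ t ∈ I,
      HasDerivWithinAt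
        (fun s =>
          (1 - u s ^ (-(4 * (k : ℝ)) / ((n : ℝ) - 2)) *
              (1 - (2 / ((n : ℝ) - 2)) ^ 2 * (u' s / u s) ^ 2) ^ k) *
            u s ^ ((2 * (n : ℝ)) / ((n : ℝ) - 2)))
        0 I t := by
  have hn3 : (3 : ℝ) ≤ (n : ℝ) := by exact_mod_cast hn
  have hn0 : ((n : ℝ)) ≠ 0 := by linarith
  have hn2 : ((n : ℝ) - 2) ≠ 0 := by linarith
  obtain ⟨m, rfl⟩ : ∃ m, k = m + 1 := ⟨k - 1, (Nat.succ_pred_eq_of_pos hk).symm⟩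
  set α : ℝ := -(4 * ((m + 1 : ℕ) : ℝ)) / ((n : ℝ) - 2) with hα
  set β : ℝ := (2 * (n : ℝ)) / ((n : ℝ) - 2) with hβ
  set a : ℝ := 2 / ((n : ℝ) - 2) with ha
  have main : ∀ t ∈ I,
      HasDerivWithinAt
        (fun s => (1 - u s ^ α * (1 - a ^ 2 * (u' s / u s) ^ 2) ^ (m + 1)) * u s ^ β)
        0 I t := by
    intro t ht
    have hp : u t ≠ 0 := ne_of_gt (hu_pos t ht)
    -- derivatives of the pieces
    have hv : HasDerivWithinAt (fun s => u' s / u s)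
        ((u'' t * u t - u' t * u' t) / u t ^ 2) I t := (hu'' t ht).div (hu' t ht) hp
    have hw : HasDerivWithinAt (fun s => 1 - a ^ 2 * (u' s / u s) ^ 2)
        (-(a ^ 2 * ((2 : ℕ) * (u' t / u t) ^ (2 - 1) *
          ((u'' t * u t - u' t * u' t) / u t ^ 2)))) I t :=
      ((hv.pow 2).const_mul (a ^ 2)).const_sub 1
    have hwk : HasDerivWithinAt (fun s => (1 - a ^ 2 * (u' s / u s) ^ 2) ^ (m + 1))
        (((m + 1 : ℕ) : ℝ) * (1 - a ^ 2 * (u' t / u t) ^ 2) ^ (m + 1 - 1) *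
          (-(a ^ 2 * ((2 : ℕ) * (u' t / u t) ^ (2 - 1) *
            ((u'' t * u t - u' t * u' t) / u t ^ 2))))) I t := hw.pow (m + 1)
    have hA : HasDerivWithinAt (fun s => u s ^ α)
        (u' t * α * u t ^ (α - 1)) I t := (hu' t ht).rpow_const (Or.inl hp)
    have hB : HasDerivWithinAt (fun s => u s ^ β)
        (u' t * β * u t ^ (β - 1)) I t := (hu' t ht).rpow_const (Or.inl hp)
    have hh : HasDerivWithinAt
        (fun s => (1 - u s ^ α * (1 - a ^ 2 * (u' s / u s) ^ 2) ^ (m + 1)) * u s ^ β)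
        ((-((u' t * α * u t ^ (α - 1)) * (1 - a ^ 2 * (u' t / u t) ^ 2) ^ (m + 1)
            + u t ^ α * (((m + 1 : ℕ) : ℝ) * (1 - a ^ 2 * (u' t / u t) ^ 2) ^ (m + 1 - 1) *
              (-(a ^ 2 * ((2 : ℕ) * (u' t / u t) ^ (2 - 1) *
                ((u'' t * u t - u' t * u' t) / u t ^ 2))))))) * u t ^ β
          + (1 - u t ^ α * (1 - a ^ 2 * (u' t / u t) ^ 2) ^ (m + 1)) *
            (u' t * β * u t ^ (β - 1))) I t :=
      ((hA.mul hwk).const_sub 1).mul hB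
    -- the equation at t
    have hE := heq t ht
    unfold RadialSigmaKEq at hE
    rw [Nat.add_sub_cancel] at hE
    -- cleaned-up form of the equation
    have hE2 : (1 - a ^ 2 * (u' t / u t) ^ 2) ^ m *
        (2 * ((m + 1 : ℕ) : ℝ) * a * (-(u'' t / u t) + (u' t / u t) ^ 2)
          + ((n : ℝ) - 2 * ((m + 1 : ℕ) : ℝ)) * (1 - a ^ 2 * (u' t / u t) ^ 2)) *
        u t ^ α = (n : ℝ) := by
      have h2 : (2 * (n : ℝ)) *
          ((1 - a ^ 2 * (u' t / u t) ^ 2) ^ m *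
            ((((m + 1 : ℕ) : ℝ) / (n : ℝ)) * a * (-(u'' t / u t) + (u' t / u t) ^ 2)
              + (1 / 2 - ((m + 1 : ℕ) : ℝ) / (n : ℝ)) * (1 - a ^ 2 * (u' t / u t) ^ 2)) *
            u t ^ α)
          = (1 - a ^ 2 * (u' t / u t) ^ 2) ^ m *
            (2 * ((m + 1 : ℕ) : ℝ) * a * (-(u'' t / u t) + (u' t / u t) ^ 2)
              + ((n : ℝ) - 2 * ((m + 1 : ℕ) : ℝ)) * (1 - a ^ 2 * (u' t / u t) ^ 2)) *
            u t ^ α := by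
        field_simp
      rw [← h2, hE]
      ring
    -- show the computed derivative vanishes
    have hD : (-((u' t * α * u t ^ (α - 1)) * (1 - a ^ 2 * (u' t / u t) ^ 2) ^ (m + 1)
            + u t ^ α * (((m + 1 : ℕ) : ℝ) * (1 - a ^ 2 * (u' t / u t) ^ 2) ^ (m + 1 - 1) *
              (-(a ^ 2 * ((2 : ℕ) * (u' t / u t) ^ (2 - 1) *
                ((u'' t * u t - u' t * u' t) / u t ^ 2))))))) * u t ^ β
          + (1 - u t ^ α * (1 - a ^ 2 * (u' t / u t) ^ 2) ^ (m + 1)) *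
            (u' t * β * u t ^ (β - 1)) = 0 := by
      rw [Real.rpow_sub_one hp, Real.rpow_sub_one hp, Nat.add_sub_cancel]
      have expand : (-((u' t * α * (u t ^ α / u t)) * (1 - a ^ 2 * (u' t / u t) ^ 2) ^ (m + 1)
            + u t ^ α * (((m + 1 : ℕ) : ℝ) * (1 - a ^ 2 * (u' t / u t) ^ 2) ^ m *
              (-(a ^ 2 * ((2 : ℕ) * (u' t / u t) ^ (2 - 1) *
                ((u'' t * u t - u' t * u' t) / u t ^ 2))))))) * u t ^ β
          + (1 - u t ^ α * (1 - a ^ 2 * (u' t / u t) ^ 2) ^ (m + 1)) *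
            (u' t * β * (u t ^ β / u t))
          = u t ^ β * (u' t / u t) * a *
            ((n : ℝ) - (1 - a ^ 2 * (u' t / u t) ^ 2) ^ m *
              (2 * ((m + 1 : ℕ) : ℝ) * a * (-(u'' t / u t) + (u' t / u t) ^ 2)
                + ((n : ℝ) - 2 * ((m + 1 : ℕ) : ℝ)) * (1 - a ^ 2 * (u' t / u t) ^ 2)) *
              u t ^ α) := by
        rw [pow_succ]
        set V := (1 - a ^ 2 * (u' t / u t) ^ 2) ^ m with hV
        rw [hα, hβ, ha]
        field_simp
        ring_nf
        field_simp
        ring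
      rw [expand, hE2, sub_self, mul_zero]
    rw [hD] at hh
    exact hh
  constructor
  · intro s hs t ht
    have key : ∀ x ∈ I, ∀ y ∈ I,
        ‖(fun s => (1 - u s ^ α * (1 - a ^ 2 * (u' s / u s) ^ 2) ^ (m + 1)) * u s ^ β) y
          - (fun s => (1 - u s ^ α * (1 - a ^ 2 * (u' s / u s) ^ 2) ^ (m + 1)) * u s ^ β) x‖
          ≤ 0 * ‖y - x‖ := fun x hx y hy =>
      Convex.norm_image_sub_le_of_norm_hasDerivWithin_le (f' := fun _ => (0 : ℝ))
        (fun z hz => main z hz) (fun z _ => by simp) hI.convex hx hy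
    have h0 := key t ht s hs
    rw [zero_mul] at h0
    have := norm_le_zero_iff.mp h0
    have := sub_eq_zero.mp this
    simpa using this
  · exact main
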